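/- Let C be a small category, let ι : Discrete (objects of C) ⥤ C be the canonical inclusion of the discrete category on the objects of C, and consider the restriction functor (whiskering along ι^op) from the category of presheaves of types on C to the category of presheaves of types on the discrete category (equivalently, families of types indexed by the objects of C). This restriction functor is faithful and comonadic: it admits a right adjoint (given by right Kan extension along ι^op), and the comparison functor to the category of coalgebras of the induced comonad is an equivalence of categories. -/

import Mathlib

open CategoryTheory CategoryTheory.Limits

universe u

/-- Let `C` be a small category, `ι : Discrete C ⥤ C` the canonical
inclusion of the discrete category on the objects of `C`, and consider the restriction
functor (whiskering along `ι.op`) from presheaves of types on `C` to presheaves of types on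
the discrete category (families of types indexed by the objects of `C`).  This restriction
functor is faithful and comonadic: it admits a right adjoint and the comparison functor to
the category of coalgebras of the induced comonad is an equivalence.
(Example 6.3.3 of the paper: presheaf toposes are Hofmann–Streicher.) -/
theorem presheaf_restriction_to_discrete_faithful_comonadic (C : Type u) [SmallCategory C] :
    letI ι : Discrete C ⥤ C := Discrete.functor id
    letI res : (Cᵒᵖ ⥤ Type u) ⥤ ((Discrete C)ᵒᵖ ⥤ Type u) :=
      (Functor.whiskeringLeft (Discrete C)ᵒᵖ Cᵒᵖ (Type u)).obj ι.op
    res.Faithful ∧ Nonempty (ComonadicLeftAdjoint res) := by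
  set ι : Discrete C ⥤ C := Discrete.functor id with hι
  set res : (Cᵒᵖ ⥤ Type u) ⥤ ((Discrete C)ᵒᵖ ⥤ Type u) :=
    (Functor.whiskeringLeft (Discrete C)ᵒᵖ Cᵒᵖ (Type u)).obj ι.op with hres
  have hfaith : res.Faithful := by
    constructor
    intro P Q α β h
    ext X
    have := congrArg (fun γ => NatTrans.app γ (Opposite.op ⟨X.unop⟩)) h
    exact congrFun (congrArg (fun f : P.obj X ⟶ Q.obj X => (ConcreteCategory.hom f).toFun) this) _
  refine ⟨hfaith, ⟨?_⟩⟩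
  have hrefl : res.ReflectsIsomorphisms := by
    constructor
    intro P Q α h
    have : ∀ X : Cᵒᵖ, IsIso (α.app X) := by
      intro X
      have : IsIso ((res.map α).app (Opposite.op ⟨X.unop⟩)) := inferInstance
      exact this
    exact NatIso.isIso_of_isIso_app α
  have : Comonad.PreservesLimitOfIsCoreflexivePair res := by
    constructor
    intro A B f g _
    infer_instance
  exact Comonad.comonadicOfHasPreservesCoreflexiveEqualizersOfReflectsIsomorphisms
    (Functor.ranAdjunction ι.op (Type u))
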